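/- Let P be a simple polygon in ℝ² with vertex set V, and suppose u and w are two consecutive extreme points of the convex hull of V (i.e., the open arc of the hull boundary between u and w contains no point of V). If the segment uw is either an edge of P or an internal diagonal of P, then uw is an edge of P. -/

import Mathlib

open Set

/-- Points in the plane. -/
abbrev Pt := ℝ × ℝ

/-- Orientation (twice signed area) of a triple of points. -/
noncomputable def orient (a b c : Pt) : ℝ :=
  (b.1 - a.1) * (c.2 - a.2) - (b.2 - a.2) * (c.1 - a.1)

/-- A simple polygon: a cyclic sequence of at least three distinct vertices whose
consecutive-vertex edges meet only as forced (adjacent edges share exactly their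
common vertex, non-adjacent edges are disjoint). -/
structure SimplePolygon where
  n : ℕ
  three_le : 3 ≤ n
  verts : ZMod n → Pt
  inj : Function.Injective verts
  edges_nonadj : ∀ i j : ZMod n, j ≠ i → j ≠ i + 1 → i ≠ j + 1 →
    segment ℝ (verts i) (verts (i + 1)) ∩ segment ℝ (verts j) (verts (j + 1)) = ∅
  edges_adj : ∀ i : ZMod n,
    segment ℝ (verts i) (verts (i + 1)) ∩ segment ℝ (verts (i + 1)) (verts (i + 1 + 1))
      = {verts (i + 1)}

/-- The boundary curve of a simple polygon. -/
def SimplePolygon.boundary (P : SimplePolygon) : Set Pt :=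
  ⋃ i : ZMod P.n, segment ℝ (P.verts i) (P.verts (i + 1))

/-- The interior region of a simple polygon: points off the boundary whose connected
component in the complement of the boundary is bounded. -/
def SimplePolygon.interiorRegion (P : SimplePolygon) : Set Pt :=
  {x | x ∉ P.boundary ∧ Bornology.IsBounded (connectedComponentIn P.boundaryᶜ x)}

/-- The exterior region of a simple polygon: points off the boundary whose connected
component in the complement of the boundary is unbounded. -/
def SimplePolygon.exteriorRegion (P : SimplePolygon) : Set Pt :=
  {x | x ∉ P.boundary ∧ ¬ Bornology.IsBounded (connectedComponentIn P.boundaryᶜ x)}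

/-- `v` is a vertex of the polygon `P`. -/
def SimplePolygon.IsVertex (P : SimplePolygon) (v : Pt) : Prop := v ∈ Set.range P.verts

/-- The (unordered) pair `u v` forms an edge of `P`. -/
def SimplePolygon.IsEdgeOf (P : SimplePolygon) (u v : Pt) : Prop :=
  ∃ i : ZMod P.n, (u = P.verts i ∧ v = P.verts (i + 1)) ∨ (v = P.verts i ∧ u = P.verts (i + 1))

/-- The segment `uv` is an internal diagonal of `P`: a segment joining two
non-adjacent vertices whose relative interior lies in the interior of `P`. -/
def SimplePolygon.IsInternalDiagonal (P : SimplePolygon) (u v : Pt) : Prop :=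
  P.IsVertex u ∧ P.IsVertex v ∧ u ≠ v ∧ ¬ P.IsEdgeOf u v ∧
    openSegment ℝ u v ⊆ P.interiorRegion

/-- The set `V(S)` of endpoints of a family of segments, each given by its pair of
endpoints. -/
def endpointSet (S : Finset (Pt × Pt)) : Set Pt :=
  {p | ∃ s ∈ S, p = s.1 ∨ p = s.2}

/-- `P` is a circumscribing polygon of `S`: the vertex set of `P` is `V(S)` and every
segment of `S` is an edge or an internal diagonal of `P`. -/
def Circumscribes (P : SimplePolygon) (S : Finset (Pt × Pt)) : Prop :=
  Set.range P.verts = endpointSet S ∧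
  ∀ s ∈ S, P.IsEdgeOf s.1 s.2 ∨ P.IsInternalDiagonal s.1 s.2

/-- The segments of `S` are nondegenerate and pairwise disjoint. -/
def PairwiseDisjointSegs (S : Finset (Pt × Pt)) : Prop :=
  (∀ s ∈ S, s.1 ≠ s.2) ∧
  ∀ s ∈ S, ∀ t ∈ S, s ≠ t →
    Disjoint (segment ℝ s.1 s.2) (segment ℝ t.1 t.2)

/-- All `2|S|` endpoints of the segments of `S` are distinct. -/
def DistinctEndpoints (S : Finset (Pt × Pt)) : Prop :=
  ∀ s ∈ S, ∀ t ∈ S, s.1 ≠ t.2 ∧ (s ≠ t → s.1 ≠ t.1 ∧ s.2 ≠ t.2)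

/-- If `u` and `w` are consecutive extreme points of the convex hull of the vertex set
of a simple polygon `P` (the open hull arc between them, i.e. the open segment `uw`
lying on the hull boundary, contains no vertex), and `uw` is an edge or an internal
diagonal of `P`, then `uw` is an edge of `P`. -/
theorem consecutive_hull_vertices_edge (P : SimplePolygon) (u w : Pt)
    (V : Set Pt) (hV : V = Set.range P.verts)
    (hu : u ∈ Set.extremePoints ℝ (convexHull ℝ V))
    (hw : w ∈ Set.extremePoints ℝ (convexHull ℝ V))
    (huw : u ≠ w)
    (harc : segment ℝ u w ⊆ frontier (convexHull ℝ V))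
    (hempty : ∀ v ∈ V, v ∉ openSegment ℝ u w)
    (h : P.IsEdgeOf u w ∨ P.IsInternalDiagonal u w) :
    P.IsEdgeOf u w := by
  rcases h with h | h
  · exact h
  exfalso
  obtain ⟨-, -, -, -, hseg⟩ := h
  haveI : NeZero P.n := ⟨by have := P.three_le; omega⟩
  set m : Pt := (1/2 : ℝ) • u + (1/2 : ℝ) • w with hm_def
  have hmo : m ∈ openSegment ℝ u w :=
    ⟨1/2, 1/2, by norm_num, by norm_num, by norm_num, rfl⟩
  have hmI : m ∈ P.interiorRegion := hseg hmo
  have hmF : m ∈ frontier (convexHull ℝ V) :=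
    harc (openSegment_subset_segment ℝ u w hmo)
  have hVfin : V.Finite := by rw [hV]; exact Set.finite_range _
  have hHc : IsClosed (convexHull ℝ V) := (hVfin.isCompact_convexHull (𝕜 := ℝ)).isClosed
  have huH : u ∈ convexHull ℝ V := extremePoints_subset hu
  have hBc : IsClosed P.boundary := by
    apply isClosed_iUnion_of_finite
    intro i
    rw [← convexHull_pair]
    exact (((Set.finite_singleton _).insert _).isCompact_convexHull (𝕜 := ℝ)).isClosed
  have hBsub : P.boundary ⊆ convexHull ℝ V := by
    intro x hx
    obtain ⟨i, hi⟩ := Set.mem_iUnion.1 hx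
    have ha : P.verts i ∈ V := by rw [hV]; exact Set.mem_range_self _
    have hb : P.verts (i+1) ∈ V := by rw [hV]; exact Set.mem_range_self _
    exact (convex_convexHull ℝ V).segment_subset (subset_convexHull ℝ V ha)
      (subset_convexHull ℝ V hb) hi
  have hmB : m ∉ P.boundary := hmI.1
  obtain ⟨r, hr, hball⟩ := Metric.isOpen_iff.1 hBc.isOpen_compl m hmB
  have hmcl : m ∈ closure (convexHull ℝ V)ᶜ := by
    rw [frontier_eq_closure_inter_closure] at hmF
    exact hmF.2
  obtain ⟨y, hy, hyd⟩ := Metric.mem_closure_iff.1 hmcl r hr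
  rw [Set.mem_compl_iff] at hy
  obtain ⟨f, c, hfc, hcf⟩ :=
    geometric_hahn_banach_closed_point (convex_convexHull ℝ V) hHc hy
  set d : Pt := y - u with hd_def
  have hfd : 0 < f d := by
    have := hfc u huH
    simp only [hd_def, map_sub]
    linarith
  have hdne : ‖d‖ ≠ 0 := by
    intro h0
    rw [norm_eq_zero] at h0
    rw [h0, map_zero] at hfd
    exact lt_irrefl 0 hfd
  have hdpos : 0 < ‖d‖ := lt_of_le_of_ne (norm_nonneg _) (Ne.symm hdne)
  set K2 : Set Pt := (fun t : ℝ => y + t • d) '' Set.Ici 0 with hK2_def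
  have hK2sub : K2 ⊆ P.boundaryᶜ := by
    rintro z ⟨t, ht, rfl⟩
    intro hz
    have hzH := hBsub hz
    have := hfc _ hzH
    have h1 : f (y + t • d) = f y + t * f d := by
      simp [map_add, map_smul]
    have h2 : 0 ≤ t * f d := mul_nonneg ht hfd.le
    linarith
  have hK2conn : IsConnected K2 := by
    apply IsConnected.image
    · exact isConnected_Ici
    · exact (continuous_const.add (continuous_id.smul continuous_const)).continuousOn
  have hyK2 : y ∈ K2 := ⟨0, Set.mem_Ici.2 (le_refl 0), by simp⟩
  have hsegsub : segment ℝ m y ⊆ P.boundaryᶜ := by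
    intro z hz
    apply hball
    have hconv : Convex ℝ (Metric.ball m r) := convex_ball m r
    exact hconv.segment_subset (Metric.mem_ball_self hr)
      (by rw [Metric.mem_ball, dist_comm]; exact hyd) hz
  have hsegconn : IsConnected (segment ℝ m y) :=
    (convex_segment m y).isConnected ⟨m, left_mem_segment ℝ m y⟩
  set K : Set Pt := segment ℝ m y ∪ K2 with hK_def
  have hKconn : IsConnected K :=
    hsegconn.union ⟨y, right_mem_segment ℝ m y, hyK2⟩ hK2conn
  have hKsub : K ⊆ P.boundaryᶜ := Set.union_subset hsegsub hK2sub
  have hmK : m ∈ K := Or.inl (left_mem_segment ℝ m y)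
  have hKcomp : K ⊆ connectedComponentIn P.boundaryᶜ m :=
    hKconn.isPreconnected.subset_connectedComponentIn hmK hKsub
  have hbdd : Bornology.IsBounded K := hmI.2.subset hKcomp
  have hbdd2 : Bornology.IsBounded K2 := hbdd.subset Set.subset_union_right
  obtain ⟨C, hC⟩ := isBounded_iff_forall_norm_le.1 hbdd2
  set t : ℝ := (|C| + ‖y‖ + 1) / ‖d‖ with ht_def
  have htpos : 0 ≤ t := by positivity
  have hCt : ‖y + t • d‖ ≤ C := hC (y + t • d) ⟨t, htpos, rfl⟩
  have h1 : ‖t • d‖ ≤ ‖y + t • d‖ + ‖y‖ := by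
    calc ‖t • d‖ = ‖(y + t • d) - y‖ := by rw [add_sub_cancel_left]
      _ ≤ ‖y + t • d‖ + ‖y‖ := norm_sub_le (y + t • d) y
  have h2 : ‖t • d‖ = t * ‖d‖ := by
    rw [norm_smul, Real.norm_eq_abs, abs_of_nonneg htpos]
  have h3 : t * ‖d‖ = |C| + ‖y‖ + 1 := by
    rw [ht_def, div_mul_cancel₀ _ hdne]
  have h4 : C ≤ |C| := le_abs_self C
  linarith
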